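/- arXiv:2604.23286 — 2 statements merged into one kernel-verified Lean document; each statement's English description precedes it below -/
import Mathlib

section
/- For integers a ≥ b ≥ 2 and c ≥ 0, the identity s_{(a,b,1^c)} = s_{(a,1^{c+1})} · s_{(b−1)} − s_{(a)} · s_{(b−1,1^{c+1})} holds in the algebra of symmetric functions. -/
open scoped BigOperators

/-- The complete homogeneous symmetric polynomial `h_k` in `n` variables. -/
noncomputable def hpoly (n k : ℕ) : MvPolynomial (Fin n) ℚ :=
  ∑ m : Sym (Fin n) k, (Sym.toMultiset m).map MvPolynomial.X |>.prod

/-- `h_k` for an integer index, vanishing for negative `k`. -/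
noncomputable def hpolyZ (n : ℕ) (k : ℤ) : MvPolynomial (Fin n) ℚ :=
  if 0 ≤ k then hpoly n k.toNat else 0

/-- The Schur polynomial `s_λ` in `n` variables, via the Jacobi–Trudi identity
`s_λ = det (h_{λ_i - i + j})`. -/
noncomputable def schurPoly (n : ℕ) (lam : List ℕ) : MvPolynomial (Fin n) ℚ :=
  ∑ σ : Equiv.Perm (Fin lam.length),
    (Equiv.Perm.sign σ : ℤ) •
      ∏ i : Fin lam.length, hpolyZ n ((lam.get i : ℤ) - ((i : ℕ) : ℤ) + ((σ i : ℕ) : ℤ))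

/-- Row-index function for the Jacobi–Trudi matrix of a near-hook shape:
`fent x y` gives `λ_i - i` (as `x` at row `0`, `y` at row `1`, `1 - i` below). -/
def fent (x y : ℤ) (i : ℕ) : ℤ := if i = 0 then x else if i = 1 then y else 1 - i

/-- Row-index function for the minors obtained by deleting the first column. -/
def qent (z : ℤ) (i : ℕ) : ℤ := if i = 0 then z + 1 else 1 - i

lemma hpolyZ_zero (n : ℕ) : hpolyZ n 0 = 1 := by
  simp only [hpolyZ, hpoly, if_pos le_rfl, Int.toNat_zero]
  rw [Finset.sum_eq_single_of_mem default (Finset.mem_univ _)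
    (fun b _ hb => absurd (Subsingleton.elim b default) hb)]
  rw [show (Sym.toMultiset (default : Sym (Fin n) 0)) = 0 from
    Multiset.card_eq_zero.mp (by simp)]
  simp

lemma hpolyZ_neg (n : ℕ) (k : ℤ) (h : k < 0) : hpolyZ n k = 0 := by
  simp [hpolyZ, not_le.mpr h]

lemma schurPoly_eq_det (n : ℕ) (lam : List ℕ) :
    schurPoly n lam =
      (Matrix.of fun i j : Fin lam.length =>
        hpolyZ n ((lam.get i : ℤ) - ((i : ℕ) : ℤ) + ((j : ℕ) : ℤ))).det := by
  rw [← Matrix.det_transpose, Matrix.det_apply]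
  unfold schurPoly
  refine Finset.sum_congr rfl fun σ _ => ?_
  simp [Matrix.transpose_apply, Units.smul_def]

lemma schurPoly_det_fun (n m : ℕ) (lam : List ℕ) (h : lam.length = m) (f : ℕ → ℤ)
    (hf : ∀ i : Fin lam.length, (lam.get i : ℤ) - ((i : ℕ) : ℤ) = f (i : ℕ)) :
    schurPoly n lam = (Matrix.of fun i j : Fin m => hpolyZ n (f (i : ℕ) + (j : ℕ))).det := by
  subst h
  rw [schurPoly_eq_det]
  congr 1
  ext i j
  rw [Matrix.of_apply, Matrix.of_apply, hf i]

lemma schurPoly_singleton (n k : ℕ) : schurPoly n [k] = hpolyZ n k := by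
  rw [schurPoly_det_fun n 1 [k] rfl (fun _ => (k : ℤ)) (fun i => by simp),
    Matrix.det_fin_one, Matrix.of_apply]
  norm_num

lemma fent_succ (x y : ℤ) (i j : ℕ) :
    fent x y (i + 1) + ((j : ℤ) + 1) = qent y i + j := by
  rcases i with _ | i
  · simp [fent, qent]; ring
  · simp only [fent, qent]
    rw [if_neg (by omega), if_neg (by omega), if_neg (by omega)]
    push_cast; ring

lemma fent_skip1 (x y : ℤ) (i j : ℕ) :
    fent x y (if i < 1 then i else i + 1) + ((j : ℤ) + 1) = qent x i + j := by
  rcases i with _ | i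
  · simp [fent, qent]; ring
  · rw [if_neg (by omega)]
    simp only [fent, qent]
    rw [if_neg (by omega), if_neg (by omega), if_neg (by omega)]
    push_cast; ring

lemma succAbove_val {n : ℕ} (p : Fin (n+1)) (i : Fin n) :
    ((p.succAbove i : Fin (n+1)) : ℕ) = if (i : ℕ) < (p : ℕ) then (i : ℕ) else (i : ℕ) + 1 := by
  rw [Fin.succAbove]
  split_ifs with h1 h2 h2
  · rfl
  · exact absurd (by simpa [Fin.lt_def] using h1) h2
  · exact absurd (by simpa [Fin.lt_def] using h2) h1
  · rfl

/-- Cofactor expansion along the first column of the near-hook Jacobi–Trudi matrix. -/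
lemma key {R : Type*} [CommRing R] (H : ℤ → R) (hneg : ∀ k : ℤ, k < 0 → H k = 0) (c : ℕ)
    (x y : ℤ) :
    (Matrix.of fun i j : Fin (c+2) => H (fent x y i + j)).det
      = H x * (Matrix.of fun i j : Fin (c+1) => H (qent y i + j)).det
        - H y * (Matrix.of fun i j : Fin (c+1) => H (qent x i + j)).det := by
  rw [show c + 2 = (c+1).succ from rfl, Matrix.det_succ_column_zero, Fin.sum_univ_succ,
    Fin.sum_univ_succ]
  rw [Finset.sum_eq_zero (fun (i : Fin c) _ => by
    have hlt : fent x y ((i.succ.succ : Fin (c+2)) : ℕ) + (((0:Fin (c+2)) : ℕ) : ℤ) < 0 := by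
      simp only [Fin.val_succ, Fin.val_zero, fent]
      rw [if_neg (by omega), if_neg (by omega)]
      push_cast; omega
    rw [show (Matrix.of fun i j : Fin (c+2) => H (fent x y i + j)) i.succ.succ 0
        = H (fent x y ((i.succ.succ : Fin (c+2)) : ℕ) + (((0:Fin (c+2)) : ℕ) : ℤ)) from rfl,
      hneg _ hlt]
    ring)]
  have hsub0 : ((Matrix.of fun i j : Fin (c+2) => H (fent x y i + j)).submatrix
      (Fin.succAbove 0) Fin.succ) = (Matrix.of fun i j : Fin (c+1) => H (qent y i + j)) := by
    ext i j
    simp only [Matrix.submatrix_apply, Matrix.of_apply]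
    congr 1
    rw [succAbove_val]
    simp only [Fin.val_zero, Fin.val_succ]
    split_ifs with h
    · exact absurd h (Nat.not_lt_zero _)
    push_cast
    exact fent_succ x y i j
  have hsub1 : ((Matrix.of fun i j : Fin (c+2) => H (fent x y i + j)).submatrix
      (Fin.succAbove ((0:Fin (c+1)).succ)) Fin.succ)
      = (Matrix.of fun i j : Fin (c+1) => H (qent x i + j)) := by
    ext i j
    simp only [Matrix.submatrix_apply, Matrix.of_apply]
    congr 1
    rw [succAbove_val]
    simp only [Fin.val_succ, Fin.val_zero, Nat.zero_add]
    push_cast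
    exact fent_skip1 x y i j
  rw [hsub0, hsub1]
  have e0 : (Matrix.of fun i j : Fin (c+2) => H (fent x y i + j)) 0 0 = H x := by
    simp [fent]
  have e1 : (Matrix.of fun i j : Fin (c+2) => H (fent x y i + j)) (0:Fin (c+1)).succ 0 = H y := by
    simp [fent]
  rw [e0, e1]
  simp
  ring

lemma hf_nearHook (a b c : ℕ) :
    ∀ i : Fin (a :: b :: List.replicate c 1).length,
      (((a :: b :: List.replicate c 1).get i : ℕ) : ℤ) - ((i : ℕ) : ℤ)
        = fent (a : ℤ) ((b : ℤ) - 1) (i : ℕ) := by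
  rintro ⟨iv, hi⟩
  match iv with
  | 0 => simp [fent]
  | 1 => simp [fent]
  | (k+2) =>
    simp only [List.get_eq_getElem, List.getElem_cons_succ]
    rw [List.getElem_replicate]
    simp only [fent]
    rw [if_neg (by omega), if_neg (by omega)]
    push_cast; ring

lemma hf_hook (a c : ℕ) :
    ∀ i : Fin (a :: List.replicate (c+1) 1).length,
      (((a :: List.replicate (c+1) 1).get i : ℕ) : ℤ) - ((i : ℕ) : ℤ)
        = fent (a : ℤ) 0 (i : ℕ) := by
  rintro ⟨iv, hi⟩
  match iv with
  | 0 => simp [fent]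
  | 1 =>
    simp only [List.get_eq_getElem, List.getElem_cons_succ]
    rw [List.getElem_replicate]
    simp [fent]
  | (k+2) =>
    simp only [List.get_eq_getElem, List.getElem_cons_succ]
    rw [List.getElem_replicate]
    simp only [fent]
    rw [if_neg (by omega), if_neg (by omega)]
    push_cast; ring

lemma hf_hook' (b c : ℕ) (hb : 1 ≤ b) :
    ∀ i : Fin ((b-1) :: List.replicate (c+1) 1).length,
      ((((b-1) :: List.replicate (c+1) 1).get i : ℕ) : ℤ) - ((i : ℕ) : ℤ)
        = fent ((b : ℤ) - 1) 0 (i : ℕ) := by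
  rintro ⟨iv, hi⟩
  match iv with
  | 0 =>
    simp only [List.get_eq_getElem, List.getElem_cons_zero, fent, if_pos rfl]
    push_cast [Nat.cast_sub hb]
    ring
  | 1 =>
    simp only [List.get_eq_getElem, List.getElem_cons_succ]
    rw [List.getElem_replicate]
    simp [fent]
  | (k+2) =>
    simp only [List.get_eq_getElem, List.getElem_cons_succ]
    rw [List.getElem_replicate]
    simp only [fent]
    rw [if_neg (by omega), if_neg (by omega)]
    push_cast; ring

/-- for integers `a ≥ b ≥ 2` and `c ≥ 0`, the identity
`s_{(a,b,1^c)} = s_{(a,1^{c+1})} s_{(b-1)} - s_{(a)} s_{(b-1,1^{c+1})}` holds in the algebra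
of symmetric functions (equivalently, as symmetric polynomials in any number of variables). -/
theorem schur_nearHook_giambelli (a b c : ℕ) (hba : b ≤ a) (hb : 2 ≤ b) :
    ∀ n : ℕ,
      schurPoly n (a :: b :: List.replicate c 1) =
        schurPoly n (a :: List.replicate (c + 1) 1) * schurPoly n [b - 1] -
          schurPoly n [a] * schurPoly n ((b - 1) :: List.replicate (c + 1) 1) := by
  intro n
  rw [schurPoly_det_fun n (c+2) _ (by simp) (fent (a : ℤ) ((b : ℤ) - 1))
      (hf_nearHook a b c),
    schurPoly_det_fun n (c+2) _ (by simp) (fent (a : ℤ) 0) (hf_hook a c),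
    schurPoly_det_fun n (c+2) _ (by simp) (fent ((b : ℤ) - 1) 0)
      (hf_hook' b c (by omega)),
    schurPoly_singleton, schurPoly_singleton,
    key _ (hpolyZ_neg n) c (a : ℤ) ((b : ℤ) - 1),
    key _ (hpolyZ_neg n) c (a : ℤ) 0,
    key _ (hpolyZ_neg n) c ((b : ℤ) - 1) 0,
    hpolyZ_zero n, Nat.cast_sub (show 1 ≤ b by omega), Nat.cast_one]
  ring
end

section
/- Let a ≥ 2 be an integer, let b = 2, let c ≥ 1, and let d, e, S be integers with a + b + c = d + e = n, d ≥ e, and 1 ≤ S ≤ ⌊(c+2)/2⌋. Set ν = (a+2, 2^{S−1}, 1^{c+2−2S}). If d < max(a + S, c + 2 − S) or d > a + c + 2 − S, then J^−_d(ν) = ∅, and consequently triple^{(4)}_{(d,e) (a,2,1^c) ν} = 0. -/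
open scoped BigOperators Classical

/-! ### Partitions as weakly decreasing lists of positive integers -/

/-- A partition: a weakly decreasing list of positive integers. -/
def IsPartition (l : List ℕ) : Prop := l.Pairwise (· ≥ ·) ∧ ∀ x ∈ l, 0 < x

/-- `l` is a partition of `n`. -/
def IsPartitionOf (n : ℕ) (l : List ℕ) : Prop := IsPartition l ∧ l.sum = n

/-- The hook partition `(a, 1^c)`. -/
def hookP (a c : ℕ) : List ℕ := a :: List.replicate c 1

/-- The near-hook partition `(a, b, 1^c)`. -/
def nearHookP (a b c : ℕ) : List ℕ := a :: b :: List.replicate c 1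

/-- The (at most) two-row partition `(x, y)`, trailing zeros omitted. -/
def twoRowP (x y : ℕ) : List ℕ := if y = 0 then (if x = 0 then [] else [x]) else [x, y]

/-- The conjugate (transpose) of a partition. -/
def conjP (l : List ℕ) : List ℕ :=
  (List.range (l.getD 0 0)).map fun j => (l.filter fun p => j < p).length

/-- Containment of Young diagrams. -/
def SubP (mu la : List ℕ) : Prop := ∀ i, mu.getD i 0 ≤ la.getD i 0

/-- `kap/eta` is a horizontal strip. -/
def HStrip (eta kap : List ℕ) : Prop :=
  SubP eta kap ∧ ∀ i, kap.getD (i + 1) 0 ≤ eta.getD i 0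

/-! ### Characters of symmetric groups; Kronecker and Littlewood–Richardson coefficients -/

/-- The permutation character of the Young-subgroup permutation module `M^μ`:
`φ^μ(g)` is the number of `g`-invariant functions `Fin n → Fin (length μ)` whose
fiber over `k` has `μ_k` elements. -/
noncomputable def permChar (n : ℕ) (mu : List ℕ) (g : Equiv.Perm (Fin n)) : ℕ :=
  Nat.card {f : Fin n → Fin mu.length //
    (∀ k : Fin mu.length, Nat.card {x : Fin n // f x = k} = mu.get k) ∧ ∀ x, f (g x) = f x}

/-- The irreducible character `χ^λ` of the symmetric group `S_n` indexed by the
partition `λ`, via the determinantal (Jacobi–Trudi) formula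
`χ^λ = ∑_{σ} sgn(σ) φ^{(λ_i - i + σ(i))_i}`, terms with a negative part vanishing. -/
noncomputable def chi (n : ℕ) (lam : List ℕ) (g : Equiv.Perm (Fin n)) : ℤ :=
  ∑ σ : Equiv.Perm (Fin lam.length),
    (Equiv.Perm.sign σ : ℤ) *
      (if ∀ i : Fin lam.length, ((i : ℕ) : ℤ) ≤ (lam.get i : ℤ) + ((σ i : ℕ) : ℤ) then
        (permChar n ((List.finRange lam.length).map fun i => lam.get i + (σ i : ℕ) - (i : ℕ)) g : ℤ)
      else 0)

/-- The Kronecker coefficient `g_{λ μ ν} = (1/n!) ∑_{σ ∈ S_n} χ^λ(σ) χ^μ(σ) χ^ν(σ)`. -/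
noncomputable def kron (n : ℕ) (lam mu nu : List ℕ) : ℚ :=
  (∑ g : Equiv.Perm (Fin n), (chi n lam g : ℚ) * (chi n mu g : ℚ) * (chi n nu g : ℚ)) /
    (n.factorial : ℚ)

/-- The Littlewood–Richardson coefficient `c^λ_{μ ν}`, as the multiplicity
`⟨χ^λ, Ind_{S_m × S_k}^{S_{m+k}} (χ^μ × χ^ν)⟩` computed by Frobenius reciprocity. -/
noncomputable def lrCoeff (lam mu nu : List ℕ) : ℚ :=
  (∑ g : Equiv.Perm (Fin mu.sum), ∑ h : Equiv.Perm (Fin nu.sum),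
      (chi mu.sum mu g : ℚ) * (chi nu.sum nu h : ℚ) *
        (chi (mu.sum + nu.sum) lam (finSumFinEquiv.permCongr (Equiv.sumCongr g h)) : ℚ)) /
    ((mu.sum.factorial : ℚ) * (nu.sum.factorial : ℚ))
/-! ### Indicator functions and the strip count `𝒩` -/

/-- Indicator function of a proposition (integer-valued). -/
noncomputable def ind (P : Prop) : ℤ := if P then 1 else 0

/-- `𝒩_{ν η s1 s2}`: the number of partitions `κ` with `η ⊆ κ ⊆ ν` such that `κ/η` is a
horizontal strip of size `s1` and `ν/κ` is a horizontal strip of size `s2`; by convention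
`0` if `s1 < 0` or `s2 < 0`. -/
noncomputable def NN (nu eta : List ℕ) (s1 s2 : ℤ) : ℕ :=
  if s1 < 0 ∨ s2 < 0 then 0
  else Nat.card {kap : List ℕ // IsPartition kap ∧ HStrip eta kap ∧ HStrip kap nu ∧
    (kap.sum : ℤ) = (eta.sum : ℤ) + s1 ∧ (nu.sum : ℤ) = (kap.sum : ℤ) + s2}

/-! ### Rosas's case data -/

/-- `tail(η) = (η_3, …, η_{ℓ(η)})`. -/
def tailP (l : List ℕ) : List ℕ := l.drop 2

/-- number of 2's in `tail(η)`. -/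
def uP (l : List ℕ) : ℕ := (tailP l).count 2

/-- number of 1's in `tail(η)`. -/
def vP (l : List ℕ) : ℕ := (tailP l).count 1

def n3P (l : List ℕ) : ℕ :=
  if l.length = 1 then 0
  else if l.getD 0 0 - l.getD 1 0 ≤ vP l then l.getD 1 0
  else uP l + 2

def n4P (l : List ℕ) : ℕ :=
  if l.length = 1 then l.getD 0 0
  else if l.getD 0 0 - l.getD 1 0 ≤ vP l then l.getD 0 0
  else uP l + vP l + 2

def d1P (l : List ℕ) : ℕ :=
  if l.length = 1 then 0
  else if l.getD 0 0 - l.getD 1 0 ≤ vP l then vP l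
  else l.getD 0 0 - l.getD 1 0

def d2P (l : List ℕ) : ℕ :=
  if l.length = 1 then 0
  else if l.getD 0 0 - l.getD 1 0 ≤ vP l then uP l
  else l.getD 1 0 - 2

def eP (a c : ℕ) (l : List ℕ) : ℤ :=
  if l.length = 1 then (c : ℤ) + 1
  else if l.getD 0 0 - l.getD 1 0 ≤ vP l then (c : ℤ) + 1
  else (a : ℤ) - 1

noncomputable def Phi (n3 n4 d1 d2 e r : ℤ) : ℤ :=
  ind (n3 ≤ r - d2 - 1 ∧ r - d2 - 1 ≤ n4) * ind (d1 + 2 * d2 < e ∧ e < d1 + 2 * d2 + 3)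
  + ind (n3 ≤ r - d2 ∧ r - d2 ≤ n4) * ind (d1 + 2 * d2 ≤ e ∧ e ≤ d1 + 2 * d2 + 3)
  + ind (n3 ≤ r - d2 + 1 ∧ r - d2 + 1 ≤ n4) * ind (d1 + 2 * d2 < e ∧ e < d1 + 2 * d2 + 3)
  - ind (n3 + d2 + d1 = r) * ind (d1 + 2 * d2 + 1 ≤ e ∧ e ≤ d1 + 2 * d2 + 2)

noncomputable def Psi (c r t N : ℤ) : ℤ :=
  ind (r - 1 ≤ c + 1 ∧ c + 1 ≤ N - r) * ind (c + 1 = t)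
  + ind ((r : ℚ) ≤ ((c : ℚ) + (t : ℚ) + 2) / 2 ∧ ((c : ℚ) + (t : ℚ) + 2) / 2 ≤ (N : ℚ) - (r : ℚ))
      * ind (|c + 1 - t| ≤ 1)

/-- Double hooks: partitions with `ℓ(λ) ≤ 2`, or `ℓ(λ) ≥ 3` and `λ_3 ≤ 2`. -/
def IsDHl (l : List ℕ) : Prop := l.length ≤ 2 ∨ (3 ≤ l.length ∧ l.getD 2 0 ≤ 2)

/-- Rosas's function `Ξ^{[a]}_η(r, c)`, for `η` a partition of `N = η.sum`. -/
noncomputable def Xi (a : ℕ) (eta : List ℕ) (r c : ℕ) : ℤ :=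
  if r = 0 then ind (eta = hookP a (c + 1))
  else if eta = [eta.sum] then ind (c = 0) * ind (r = 1)
  else if eta = List.replicate eta.sum 1 then ind (eta = conjP (twoRowP (eta.sum - r) r))
  else if 2 ≤ eta.getD 0 0 ∧ 2 ≤ eta.length ∧
      eta = eta.getD 0 0 :: List.replicate (eta.length - 1) 1 then
    Psi (c : ℤ) (r : ℤ) ((eta.length : ℤ) - 1) (eta.sum : ℤ)
  else if IsDHl eta ∧ 2 ≤ eta.length ∧ 2 ≤ eta.getD 1 0 then
    Phi (n3P eta) (n4P eta) (d1P eta) (d2P eta) (eP a c eta) (r : ℤ)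
  else 0
/-! ### Index sets and triple sums.  Throughout, `n = a + b + c`, `N = n - b + 1 = a + c + 1`,
`M = n - a = b + c`. -/

/-- The index set `I^+(ν)`. -/
noncomputable def Iplus (a b c : ℕ) (nu : List ℕ) : Set (List ℕ × ℕ × ℕ) :=
  {p | IsPartitionOf (a + c + 1) p.1 ∧ IsDHl p.1 ∧
    p.2.1 ≤ (b - 1) / 2 ∧ p.2.2 ≤ (a + c + 1) / 2 ∧
    NN nu p.1 ((p.2.1 : ℤ) - 1) ((b : ℤ) - (p.2.1 : ℤ)) <
      NN nu p.1 (p.2.1 : ℤ) ((b : ℤ) - 1 - (p.2.1 : ℤ)) ∧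
    0 < Xi a p.1 p.2.2 c}

/-- The index set `I^-(ν)`. -/
noncomputable def Iminus (a b c : ℕ) (nu : List ℕ) : Set (List ℕ × ℕ × ℕ) :=
  {p | IsPartitionOf (b + c) p.1 ∧ IsDHl p.1 ∧
    p.2.1 ≤ a / 2 ∧ p.2.2 ≤ (b + c) / 2 ∧
    NN nu p.1 ((p.2.1 : ℤ) - 1) ((a : ℤ) - (p.2.1 : ℤ) + 1) <
      NN nu p.1 (p.2.1 : ℤ) ((a : ℤ) - (p.2.1 : ℤ)) ∧
    0 < Xi (b - 1) p.1 p.2.2 c}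

/-- The index set `J^+_d(ν)`. -/
noncomputable def Jplus (a b c d : ℕ) (nu : List ℕ) : Set (List ℕ × ℕ × ℕ) :=
  {p | p ∈ Iplus a b c nu ∧
    max ((a : ℤ) + (c : ℤ) + 1 - (p.2.2 : ℤ) + (p.2.1 : ℤ))
        ((p.2.2 : ℤ) + (b : ℤ) - 1 - (p.2.1 : ℤ)) ≤ (d : ℤ) ∧
    (d : ℤ) ≤ (a : ℤ) + (b : ℤ) + (c : ℤ) - (p.2.2 : ℤ) - (p.2.1 : ℤ)}

/-- The index set `J^-_d(ν)`. -/
noncomputable def Jminus (a b c d : ℕ) (nu : List ℕ) : Set (List ℕ × ℕ × ℕ) :=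
  {p | p ∈ Iminus a b c nu ∧
    max ((a : ℤ) - (p.2.1 : ℤ) + (p.2.2 : ℤ))
        ((p.2.1 : ℤ) + (b : ℤ) + (c : ℤ) - (p.2.2 : ℤ)) ≤ (d : ℤ) ∧
    (d : ℤ) ≤ (a : ℤ) + (b : ℤ) + (c : ℤ) - (p.2.1 : ℤ) - (p.2.2 : ℤ)}

/-- `triple^{(1)}_{(d,e) (a,b,1^c) ν}`. -/
noncomputable def triple1 (a b c d : ℕ) (nu : List ℕ) : ℚ :=
  ∑ᶠ p ∈ {p : List ℕ × ℕ × ℕ |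
      IsPartitionOf (a + c + 1) p.1 ∧ p.2.1 ≤ (b - 1) / 2 ∧ p.2.2 ≤ (a + c + 1) / 2},
    (ind (max ((a : ℤ) + (c : ℤ) + 1 - (p.2.2 : ℤ) + (p.2.1 : ℤ))
            ((p.2.2 : ℤ) + (b : ℤ) - 1 - (p.2.1 : ℤ)) ≤ (d : ℤ) ∧
          (d : ℤ) ≤ (a : ℤ) + (b : ℤ) + (c : ℤ) - (p.2.2 : ℤ) - (p.2.1 : ℤ)) : ℚ) *
      lrCoeff nu p.1 (twoRowP (b - 1 - p.2.1) p.2.1) *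
      kron (a + c + 1) (twoRowP (a + c + 1 - p.2.2) p.2.2) (hookP a (c + 1)) p.1

/-- `triple^{(2)}_{(d,e) (a,b,1^c) ν}`. -/
noncomputable def triple2 (a b c d : ℕ) (nu : List ℕ) : ℚ :=
  ∑ᶠ p ∈ {p : List ℕ × ℕ × ℕ |
      IsPartitionOf (b + c) p.1 ∧ p.2.1 ≤ a / 2 ∧ p.2.2 ≤ (b + c) / 2},
    (ind (max ((a : ℤ) - (p.2.1 : ℤ) + (p.2.2 : ℤ))
            ((p.2.1 : ℤ) + (b : ℤ) + (c : ℤ) - (p.2.2 : ℤ)) ≤ (d : ℤ) ∧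
          (d : ℤ) ≤ (a : ℤ) + (b : ℤ) + (c : ℤ) - (p.2.1 : ℤ) - (p.2.2 : ℤ)) : ℚ) *
      lrCoeff nu (twoRowP (a - p.2.1) p.2.1) p.1 *
      kron (b + c) (twoRowP (b + c - p.2.2) p.2.2) (hookP (b - 1) (c + 1)) p.1

/-- `triple^{(3)}_{(d,e) (a,b,1^c) ν}`. -/
noncomputable def triple3 (a b c d : ℕ) (nu : List ℕ) : ℚ :=
  ∑ᶠ p ∈ Jplus a b c d nu,
    lrCoeff nu p.1 (twoRowP (b - 1 - p.2.1) p.2.1) *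
      kron (a + c + 1) (twoRowP (a + c + 1 - p.2.2) p.2.2) (hookP a (c + 1)) p.1

/-- `triple^{(4)}_{(d,e) (a,b,1^c) ν}`. -/
noncomputable def triple4 (a b c d : ℕ) (nu : List ℕ) : ℚ :=
  ∑ᶠ p ∈ Jminus a b c d nu,
    lrCoeff nu (twoRowP (a - p.2.1) p.2.1) p.1 *
      kron (b + c) (twoRowP (b + c - p.2.2) p.2.2) (hookP (b - 1) (c + 1)) p.1

/-- The partition `ν = (a+2, 2^{S-1}, 1^{c+2-2S})`. -/
def nuSP (a S c : ℕ) : List ℕ :=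
  (a + 2) :: (List.replicate (S - 1) 2 ++ List.replicate (c + 2 - 2 * S) 1)

/-- The partition `δ* = (2^S, 1^{c+2-2S})`. -/
def deltaStarP (S c : ℕ) : List ℕ :=
  List.replicate S 2 ++ List.replicate (c + 2 - 2 * S) 1
/-! ### Blasiak's colored Yamanouchi tableaux.
Colored letters are coded by positive naturals: the barred letter `ī` is `2i - 1` and the
unbarred letter `i` is `2i`, so that the order on codes is the natural order
`1̄ < 1 < 2̄ < 2 < ⋯`, and a letter is barred iff its code is odd. -/

/-- The underlying (unbarred) value of a colored letter. -/
def letterVal (x : ℕ) : ℕ := (x + 1) / 2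

/-- Bumping condition for inserting `x` into a row: an unbarred letter displaces the first
entry strictly greater than it; a barred letter displaces the first entry weakly greater. -/
def rowBumpB (x y : ℕ) : Bool := if x % 2 = 1 then decide (x ≤ y) else decide (x < y)

/-- Bumping condition for inserting `x` into a column: an unbarred letter displaces the first
entry weakly greater than it; a barred letter displaces the first entry strictly greater. -/
def colBumpB (x y : ℕ) : Bool := if x % 2 = 1 then decide (x < y) else decide (x ≤ y)

/-- One pass of Haiman mixed insertion, with fuel.  `mixedIns fuel T true i x` inserts the
letter `x` into row `i` of the tableau `T` (a list of rows); `mixedIns fuel T false j x`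
inserts `x` into column `j`.  A bumped unbarred letter is inserted into the next row down,
and a bumped barred letter into the next column to the right. -/
def mixedIns : ℕ → List (List ℕ) → Bool → ℕ → ℕ → List (List ℕ)
  | 0, T, _, _, _ => T
  | fuel + 1, T, true, i, x =>
      if i < T.length then
        let row := T.getD i []
        match row.findIdx? (fun y => rowBumpB x y) with
        | none => T.set i (row ++ [x])
        | some p =>
            let y := row.getD p 0
            let T' := T.set i (row.set p x)
            if y % 2 = 1 then mixedIns fuel T' false (p + 1) y
            else mixedIns fuel T' true (i + 1) y
      else T ++ [[x]]
  | fuel + 1, T, false, j, x =>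
      match (List.range T.length).find? (fun i =>
          decide ((T.getD i []).length ≤ j) || colBumpB x ((T.getD i []).getD j 0)) with
      | none => T ++ [[x]]
      | some i =>
          let row := T.getD i []
          if row.length ≤ j then T.set i (row ++ [x])
          else
            let y := row.getD j 0
            let T' := T.set i (row.set j x)
            if y % 2 = 1 then mixedIns fuel T' false (j + 1) y
            else mixedIns fuel T' true (i + 1) y

/-- Mixed insertion of the colored letter `x` into the colored tableau `T`: unbarred letters
are inserted into the first row, barred letters into the first column. -/
def mixedInsert (T : List (List ℕ)) (x : ℕ) : List (List ℕ) :=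
  mixedIns (((T.map List.length).sum + x + 4) ^ 2) T (decide (x % 2 = 0)) 0 x

/-- The mixed insertion tableau `P(w)` of a colored word `w`. -/
def Pw (w : List ℕ) : List (List ℕ) := w.foldl mixedInsert []

/-- A colored word: all letter codes are positive. -/
def ValidWord (w : List ℕ) : Prop := ∀ x ∈ w, 0 < x

/-- The total color `tc(w)`: the number of barred letters. -/
def totalColor (w : List ℕ) : ℕ := (w.filter fun x => x % 2 = 1).length

/-- `w^{blft}`: move the barred letters to the front (preserving relative order) and
erase the bars. -/
def blft (w : List ℕ) : List ℕ :=
  ((w.filter fun x => x % 2 = 1) ++ (w.filter fun x => x % 2 = 0)).map letterVal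

/-- The colored word `w` has (unbarred) content `λ`: for each `i`, the number of
occurrences of `i+1` and of `(i+1)‾` together is `λ_{i+1}`. -/
def HasContent (w : List ℕ) (lam : List ℕ) : Prop :=
  ∀ i : ℕ, (w.filter fun x => letterVal x = i + 1).length = lam.getD i 0

/-- An ordinary word (of positive integers) is Yamanouchi if the content of each of its
suffixes is a partition. -/
def IsYamanouchi (w : List ℕ) : Prop :=
  ∀ k i : ℕ, ((w.drop k).filter fun x => x = i + 2).length ≤
    ((w.drop k).filter fun x => x = i + 1).length

/-- The set `CYT_{λ, d}` of colored Yamanouchi tableaux. -/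
def CYT (lam : List ℕ) (dcol : ℕ) : Set (List (List ℕ)) :=
  {T | ∃ w : List ℕ, ValidWord w ∧ HasContent w lam ∧ totalColor w = dcol ∧
    IsYamanouchi (blft w) ∧ Pw w = T}

/-- The shape of a tableau. -/
def shapeOf (T : List (List ℕ)) : List ℕ := T.map List.length

/-- The southwest-most entry of `T` (first entry of the last row) is unbarred. -/
def swUnbarred (T : List (List ℕ)) : Prop := (T.getLastD []).headD 0 % 2 = 0

/-- The set `ℬ_{λ (n-d, 1^d) ν}` of Blasiak tableaux: colored Yamanouchi tableaux in
`CYT_{λ, d}` of shape `ν` whose southwest-most entry is unbarred.  By Blasiak's theorem its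
cardinality is the Kronecker coefficient `g_{λ (n-d, 1^d) ν}`. -/
def BlasiakSet (lam : List ℕ) (dcol : ℕ) (nu : List ℕ) : Set (List (List ℕ)) :=
  {T | T ∈ CYT lam dcol ∧ shapeOf T = nu ∧ swUnbarred T}


lemma getD_replicate' (a d n j : ℕ) : (List.replicate n a).getD j d = if j < n then a else d := by
  induction n generalizing j with
  | zero => simp
  | succ n ih =>
    cases j with
    | zero => simp [List.replicate_succ]
    | succ j =>
        rw [List.replicate_succ, List.getD_cons_succ, ih]
        simp [Nat.succ_lt_succ_iff]

lemma getD_append' (l l' : List ℕ) (j d : ℕ) :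
    (l ++ l').getD j d = if j < l.length then l.getD j d else l'.getD (j - l.length) d := by
  induction l generalizing j with
  | nil => simp
  | cons x t ih =>
    cases j with
    | zero => simp
    | succ j => simpa [List.getD_cons_succ, Nat.succ_lt_succ_iff] using ih j

lemma getD22 (p q j : ℕ) :
    (List.replicate p 2 ++ List.replicate q 1).getD j 0 =
      if j < p then 2 else if j < p + q then 1 else 0 := by
  rw [getD_append']
  simp only [List.length_replicate, getD_replicate']
  split_ifs <;> omega

lemma getD_pos' {l : List ℕ} (hpos : ∀ x ∈ l, 0 < x) {j : ℕ} (hj : j < l.length) :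
    0 < l.getD j 0 := by
  induction l generalizing j with
  | nil => simp at hj
  | cons x t ih =>
    cases j with
    | zero => exact hpos x (by simp)
    | succ j =>
      exact ih (fun y hy => hpos y (by simp [hy])) (by simpa using hj)

lemma getD_succ_le {l : List ℕ} (hs : l.Pairwise (· ≥ ·)) (j : ℕ) :
    l.getD (j + 1) 0 ≤ l.getD j 0 := by
  induction l generalizing j with
  | nil => simp
  | cons x t ih =>
    rw [List.pairwise_cons] at hs
    cases j with
    | zero =>
      cases t with
      | nil => simp
      | cons y u => simpa using hs.1 y (by simp)
    | succ j => simpa using ih hs.2 j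

lemma ext_pos : ∀ (l₁ l₂ : List ℕ), (∀ x ∈ l₁, 0 < x) → (∀ x ∈ l₂, 0 < x) →
    (∀ j, l₁.getD j 0 = l₂.getD j 0) → l₁ = l₂
  | [], [], _, _, _ => rfl
  | [], y :: t, _, h₂, h => by
      have := h 0; simp at this; have := h₂ y (by simp); omega
  | x :: t, [], h₁, _, h => by
      have := h 0; simp at this; have := h₁ x (by simp); omega
  | x :: t₁, y :: t₂, h₁, h₂, h => by
      have hx : x = y := by simpa using h 0
      have ht : t₁ = t₂ := ext_pos t₁ t₂ (fun z hz => h₁ z (by simp [hz]))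
        (fun z hz => h₂ z (by simp [hz])) (fun j => by simpa using h (j + 1))
      rw [hx, ht]

lemma sorted22 (p q : ℕ) :
    (List.replicate p 2 ++ List.replicate q 1 : List ℕ).Pairwise (· ≥ ·) := by
  rw [List.pairwise_append]
  refine ⟨?_, ?_, ?_⟩
  · exact List.pairwise_replicate.mpr (Or.inr le_rfl)
  · exact List.pairwise_replicate.mpr (Or.inr le_rfl)
  · intro x hx y hy
    rw [List.eq_of_mem_replicate hx, List.eq_of_mem_replicate hy]
    omega

lemma mem22 {p q x : ℕ} (hx : x ∈ List.replicate p 2 ++ List.replicate q 1) :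
    x = 2 ∨ x = 1 := by
  rcases List.mem_append.mp hx with h | h
  · exact Or.inl (List.eq_of_mem_replicate h)
  · exact Or.inr (List.eq_of_mem_replicate h)

lemma sum22 (p q : ℕ) : (List.replicate p 2 ++ List.replicate q 1).sum = 2 * p + q := by
  simp [List.sum_replicate]; ring

lemma canon : ∀ (l : List ℕ), l.Pairwise (· ≥ ·) → (∀ x ∈ l, 0 < x) → (∀ x ∈ l, x ≤ 2) →
    l = List.replicate (l.count 2) 2 ++ List.replicate (l.count 1) 1
  | [], _, _, _ => by simp
  | y :: t, hs, hpos, h2 => by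
    rw [List.pairwise_cons] at hs
    have hy := hpos y (by simp)
    have hy2 := h2 y (by simp)
    interval_cases y
    · have h1 : ∀ x ∈ t, x = 1 := fun x hx =>
        le_antisymm (hs.1 x hx) (hpos x (by simp [hx]))
      have hc2 : (1 :: t).count 2 = 0 := by
        rw [List.count_eq_zero]
        intro hmem
        rcases List.mem_cons.mp hmem with h | h
        · omega
        · have := h1 2 h; omega
      have hc1 : (1 :: t).count 1 = t.length + 1 := by
        rw [List.count_cons_self]
        congr 1
        rw [List.count_eq_length]
        intro b hb
        have := h1 b hb; simp [this]
      rw [hc2, hc1]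
      have : t = List.replicate t.length 1 := by
        rw [List.eq_replicate_iff]; exact ⟨rfl, h1⟩
      simp [List.replicate_succ]
      exact this
    · have ht := canon t hs.2 (fun x hx => hpos x (by simp [hx])) (fun x hx => h2 x (by simp [hx]))
      rw [List.count_cons_self, List.count_cons_of_ne (by omega)]
      rw [List.replicate_succ]
      simpa using ht

section NNone

lemma nu_getD (a S c : ℕ) (hS1 : 1 ≤ S) (hS2 : 2 * S ≤ c + 2) (j : ℕ) :
    (nuSP a S c).getD j 0 =
      if j = 0 then a + 2 else if j < S then 2 else if j < c + 2 - S then 1 else 0 := by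
  cases j with
  | zero => simp [nuSP]
  | succ j =>
    rw [nuSP, List.getD_cons_succ, getD22]
    split_ifs <;> first | omega | exact (‹False›).elim

lemma deltaStar_cons (S c : ℕ) (hS1 : 1 ≤ S) :
    deltaStarP S c = 2 :: (List.replicate (S - 1) 2 ++ List.replicate (c + 2 - 2 * S) 1) := by
  obtain ⟨S', rfl⟩ : ∃ S', S = S' + 1 := ⟨S - 1, by omega⟩
  simp [deltaStarP, List.replicate_succ]

lemma NN_one (a S c s : ℕ) (hS1 : 1 ≤ S) (hS2 : 2 * S ≤ c + 2) (hs : s ≤ a) :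
    NN (nuSP a S c) (deltaStarP S c) (s : ℤ) ((a : ℤ) - (s : ℤ)) = 1 := by
  set T : List ℕ := List.replicate (S - 1) 2 ++ List.replicate (c + 2 - 2 * S) 1 with hT
  have hνT : nuSP a S c = (a + 2) :: T := rfl
  have hδT : deltaStarP S c = 2 :: T := deltaStar_cons S c hS1
  have Tpos : ∀ x ∈ T, 0 < x := fun x hx => by rcases mem22 hx with h | h <;> omega
  have Tle2 : ∀ j, T.getD j 0 ≤ 2 := fun j => by rw [hT, getD22]; split_ifs <;> omega
  have Tsorted : T.Pairwise (· ≥ ·) := sorted22 _ _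
  have Tmem2 : ∀ x ∈ T, x ≤ 2 := fun x hx => by rcases mem22 hx with h | h <;> omega
  have key : ∀ κ : List ℕ, (IsPartition κ ∧ HStrip (deltaStarP S c) κ ∧
      HStrip κ (nuSP a S c) ∧ (κ.sum : ℤ) = ((deltaStarP S c).sum : ℤ) + (s : ℤ) ∧
      ((nuSP a S c).sum : ℤ) = (κ.sum : ℤ) + ((a : ℤ) - (s : ℤ))) →
      κ = (s + 2) :: T := by
    rintro κ ⟨hκpart, hst1, hst2, hsum1, _⟩
    have hκsum : (κ.sum : ℤ) = ((2 : ℕ) + T.sum : ℕ) + (s : ℤ) := by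
      rw [hsum1, hδT, List.sum_cons]
    have hκne : κ ≠ [] := by
      intro h
      rw [h] at hκsum
      simp only [List.sum_nil, Nat.cast_zero] at hκsum
      omega
    obtain ⟨y, u, rfl⟩ : ∃ y u, κ = y :: u := by
      cases κ with
      | nil => exact absurd rfl hκne
      | cons y u => exact ⟨y, u, rfl⟩
    have hu : ∀ j, u.getD j 0 = T.getD j 0 := by
      intro j
      have h1 : T.getD j 0 ≤ u.getD j 0 := by
        have := hst1.1 (j + 1)
        rwa [hδT, List.getD_cons_succ, List.getD_cons_succ] at this
      have h2 : u.getD j 0 ≤ T.getD j 0 := by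
        have := hst2.1 (j + 1)
        rwa [hνT, List.getD_cons_succ, List.getD_cons_succ] at this
      omega
    have huT : u = T := ext_pos u T (fun z hz => hκpart.2 z (by simp [hz])) Tpos hu
    subst huT
    have hy : y = s + 2 := by
      rw [List.sum_cons] at hκsum
      omega
    rw [hy]
  rw [NN, if_neg (by omega), Nat.card_eq_one_iff_unique]
  constructor
  · constructor
    intro ⟨κ₁, h₁⟩ ⟨κ₂, h₂⟩
    exact Subtype.ext ((key κ₁ h₁).trans (key κ₂ h₂).symm)
  · refine ⟨⟨(s + 2) :: T, ?_, ?_, ?_, ?_, ?_⟩⟩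
    · constructor
      · rw [List.pairwise_cons]
        exact ⟨fun b hb => by have := Tmem2 b hb; omega, Tsorted⟩
      · intro x hx
        rcases List.mem_cons.mp hx with h | h
        · omega
        · exact Tpos x h
    · refine ⟨fun j => ?_, fun j => ?_⟩
      · rw [hδT]; cases j with
        | zero => simp
        | succ j => simp [List.getD_cons_succ]
      · rw [hδT, List.getD_cons_succ]
        cases j with
        | zero => simpa using Tle2 0
        | succ j => simpa [List.getD_cons_succ] using getD_succ_le Tsorted j
    · refine ⟨fun j => ?_, fun j => ?_⟩
      · rw [hνT]; cases j with
        | zero => simp; omega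
        | succ j => simp [List.getD_cons_succ]
      · rw [hνT, List.getD_cons_succ]
        cases j with
        | zero => rw [List.getD_cons_zero]; have := Tle2 0; omega
        | succ j => simpa [List.getD_cons_succ] using getD_succ_le Tsorted j
    · rw [hδT, List.sum_cons, List.sum_cons]
      push_cast
      ring
    · rw [hνT, List.sum_cons, List.sum_cons]
      push_cast
      omega

end NNone


section Classify

lemma ind_nonneg (P : Prop) : 0 ≤ ind P := by
  unfold ind; split_ifs <;> norm_num

lemma ind_mul_eq_zero {P Q : Prop} (h : ¬(P ∧ Q)) : ind P * ind Q = 0 := by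
  unfold ind
  by_cases h1 : P <;> by_cases h2 : Q
  · exact absurd ⟨h1, h2⟩ h
  all_goals simp [h1, h2]

lemma sum_ind_pos {P Q R T : Prop} (h : 0 < ind P * ind Q + ind R * ind T) :
    (P ∧ Q) ∨ (R ∧ T) := by
  by_cases hP : P ∧ Q
  · exact Or.inl hP
  · by_cases hR : R ∧ T
    · exact Or.inr hR
    · rw [ind_mul_eq_zero hP, ind_mul_eq_zero hR] at h; norm_num at h

lemma phi_ind_pos {P1 Q1 P2 Q2 P3 Q3 P4 Q4 : Prop}
    (h : 0 < ind P1 * ind Q1 + ind P2 * ind Q2 + ind P3 * ind Q3 - ind P4 * ind Q4) :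
    (P1 ∧ Q1) ∨ (P2 ∧ Q2) ∨ (P3 ∧ Q3) := by
  by_cases h1 : P1 ∧ Q1
  · exact Or.inl h1
  by_cases h2 : P2 ∧ Q2
  · exact Or.inr (Or.inl h2)
  by_cases h3 : P3 ∧ Q3
  · exact Or.inr (Or.inr h3)
  rw [ind_mul_eq_zero h1, ind_mul_eq_zero h2, ind_mul_eq_zero h3] at h
  have h4 := mul_nonneg (ind_nonneg P4) (ind_nonneg Q4)
  omega

lemma Phi_pos {n3 n4 d1 d2 e r : ℤ} (h : 0 < Phi n3 n4 d1 d2 e r) :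
    (n3 ≤ r - d2 - 1 ∧ r - d2 - 1 ≤ n4 ∧ d1 + 2 * d2 < e ∧ e < d1 + 2 * d2 + 3) ∨
    (n3 ≤ r - d2 ∧ r - d2 ≤ n4 ∧ d1 + 2 * d2 ≤ e ∧ e ≤ d1 + 2 * d2 + 3) ∨
    (n3 ≤ r - d2 + 1 ∧ r - d2 + 1 ≤ n4 ∧ d1 + 2 * d2 < e ∧ e < d1 + 2 * d2 + 3) := by
  rw [Phi] at h
  rcases phi_ind_pos h with ⟨⟨a1, a2⟩, b1, b2⟩ | ⟨⟨a1, a2⟩, b1, b2⟩ | ⟨⟨a1, a2⟩, b1, b2⟩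
  · exact Or.inl ⟨a1, a2, b1, b2⟩
  · exact Or.inr (Or.inl ⟨a1, a2, b1, b2⟩)
  · exact Or.inr (Or.inr ⟨a1, a2, b1, b2⟩)

lemma mem_getD {l : List ℕ} {y : ℕ} (h : y ∈ l) : ∃ k, k < l.length ∧ l.getD k 0 = y := by
  induction l with
  | nil => simp at h
  | cons x t ih =>
    rcases List.mem_cons.mp h with h | h
    · exact ⟨0, by simp, by simp [h]⟩
    · obtain ⟨k, hk, hk2⟩ := ih h
      exact ⟨k + 1, by simpa using hk, by simpa using hk2⟩

lemma classify (a S c x p q r : ℕ) (hc : 1 ≤ c) (hS1 : 1 ≤ S) (hS2 : 2 * S ≤ c + 2)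
    (hxpq : x + 2 * p + q = c + 2) (hx1 : 1 ≤ x)
    (hxp : 1 ≤ p → 2 ≤ x)
    (hlen : 1 + p + q + S ≤ c + 2)
    (hp2 : 1 ≤ p → p + 1 ≤ S)
    (hXi : 0 < Xi 1 (x :: (List.replicate p 2 ++ List.replicate q 1)) r c) :
    x = 2 ∧ p + 1 = S ∧ q = c + 2 - 2 * S ∧ r = S := by
  set t : List ℕ := List.replicate p 2 ++ List.replicate q 1 with ht
  have hLen : (x :: t).length = 1 + (p + q) := by simp [ht]; omega
  have hSum : (x :: t).sum = c + 2 := by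
    rw [List.sum_cons, ht, sum22]; omega
  rw [Xi] at hXi
  split_ifs at hXi with h1 h2 h3 h4 h5
  · -- r = 0 : δ must be the hook (1, 1^{c+1}), contradicting length bound
    have hδ : x :: t = hookP 1 (c + 1) := by
      by_contra h
      rw [ind, if_neg h] at hXi
      exact absurd hXi (by norm_num)
    rw [hookP] at hδ
    injection hδ with hx ht2
    have hp0 : p = 0 := by
      by_contra h
      have := hxp (by omega); omega
    have hq : p + q = c + 1 := by
      have := congrArg List.length ht2
      simpa [ht] using this
    omega
  · -- one-row case : needs c = 0
    have hcc : c = 0 := by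
      by_contra h
      rw [ind, if_neg h] at hXi
      simp at hXi
    omega
  · -- one-column case : contradicts length bound
    rw [hSum] at h3
    have h3' : x :: t = 1 :: List.replicate (c + 1) 1 := by
      rw [h3]; rfl
    injection h3' with hx ht2
    have hp0 : p = 0 := by
      by_contra h
      have := hxp (by omega); omega
    have hq : p + q = c + 1 := by
      have := congrArg List.length ht2
      simpa [ht] using this
    omega
  · -- hook case
    obtain ⟨hx2, hlen2, hform⟩ := h4
    rw [List.getD_cons_zero] at hx2 hform
    injection hform with _ ht2
    have hp0 : p = 0 := by
      by_contra hp0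
      have h2m : (2 : ℕ) ∈ t := by
        rw [ht]; exact List.mem_append_left _ (List.mem_replicate.mpr ⟨by omega, rfl⟩)
      rw [ht2] at h2m
      have := List.eq_of_mem_replicate h2m; omega
    rw [hLen, hSum] at hXi
    rw [Psi] at hXi
    rcases sum_ind_pos hXi with ⟨hA, hB⟩ | ⟨hC, hD⟩
    · -- c + 1 = t-param : impossible
      push_cast at hB
      omega
    · rw [abs_le] at hD
      obtain ⟨hC1, hC2⟩ := hC
      push_cast at hC1 hC2 hD
      have hr1' : 2 * r ≤ c + p + q + 2 := by
        have h' : 2 * (r : ℚ) ≤ (c : ℚ) + (p : ℚ) + (q : ℚ) + 2 := by linarith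
        exact_mod_cast h'
      have hr2' : c + p + q + 2 + 2 * r ≤ 2 * (c + 2) := by
        have h' : (c : ℚ) + (p : ℚ) + (q : ℚ) + 2 + 2 * (r : ℚ) ≤ 2 * ((c : ℚ) + 2) := by
          linarith
        exact_mod_cast h'
      omega
  · -- double hook case
    have hg1 : (x :: t).getD 1 0 = t.getD 0 0 := rfl
    have h2t : 2 ≤ t.getD 0 0 := by rw [← hg1]; exact h5.2.2
    have hp1 : 1 ≤ p := by
      rw [ht, getD22] at h2t
      split_ifs at h2t <;> omega
    obtain ⟨p', rfl⟩ : ∃ p', p = p' + 1 := ⟨p - 1, by omega⟩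
    have hx2 : 2 ≤ x := hxp (by omega)
    have htail : tailP (x :: t) = List.replicate p' 2 ++ List.replicate q 1 := by
      simp [tailP, ht, List.replicate_succ]
    have hu : uP (x :: t) = p' := by
      rw [uP, htail]
      simp [List.count_append, List.count_replicate]
    have hv : vP (x :: t) = q := by
      rw [vP, htail]
      simp [List.count_append, List.count_replicate]
    have hg0 : (x :: t).getD 0 0 = x := rfl
    have hg1' : (x :: t).getD 1 0 = 2 := by
      rw [hg1, ht, getD22]
      simp
    have hL1 : ¬((x :: t).length = 1) := by rw [hLen]; omega
    by_cases hcase : x - 2 ≤ q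
    · have hcase' : (x :: t).getD 0 0 - (x :: t).getD 1 0 ≤ vP (x :: t) := by
        rw [hg0, hg1', hv]; omega
      have hn3 : n3P (x :: t) = 2 := by
        rw [n3P, if_neg hL1, if_pos hcase', hg1']
      have hn4 : n4P (x :: t) = x := by
        rw [n4P, if_neg hL1, if_pos hcase', hg0]
      have hd1 : d1P (x :: t) = q := by
        rw [d1P, if_neg hL1, if_pos hcase', hv]
      have hd2 : d2P (x :: t) = p' := by
        rw [d2P, if_neg hL1, if_pos hcase', hu]
      have he : eP 1 c (x :: t) = (c : ℤ) + 1 := by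
        rw [eP, if_neg hL1, if_pos hcase']
      rw [hn3, hn4, hd1, hd2, he] at hXi
      rcases Phi_pos hXi with h | h | h
      · push_cast at h; omega
      · push_cast at h
        have := hp2 (by omega)
        omega
      · push_cast at h; omega
    · have hcase' : ¬((x :: t).getD 0 0 - (x :: t).getD 1 0 ≤ vP (x :: t)) := by
        rw [hg0, hg1', hv]; omega
      have hn3 : n3P (x :: t) = p' + 2 := by
        rw [n3P, if_neg hL1, if_neg hcase', hu]
      have hn4 : n4P (x :: t) = p' + q + 2 := by
        rw [n4P, if_neg hL1, if_neg hcase', hu, hv]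
      have hd1 : d1P (x :: t) = x - 2 := by
        rw [d1P, if_neg hL1, if_neg hcase', hg0, hg1']
      have hd2 : d2P (x :: t) = 0 := by
        rw [d2P, if_neg hL1, if_neg hcase', hg1']
      have he : eP 1 c (x :: t) = ((1 : ℕ) : ℤ) - 1 := by
        rw [eP, if_neg hL1, if_neg hcase']
      rw [hn3, hn4, hd1, hd2, he] at hXi
      rcases Phi_pos hXi with h | h | h <;> (push_cast at h; omega)
  · exact absurd hXi (by norm_num)

end Classify

/-- Lemma `nulllemma`: with `a ≥ 2`, `b = 2`, `c ≥ 1`,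
`a + 2 + c = d + e = n`, `d ≥ e`, `1 ≤ S ≤ ⌊(c+2)/2⌋` and `ν = (a+2, 2^{S-1}, 1^{c+2-2S})`:
if `d < max(a + S, c + 2 - S)` or `d > a + c + 2 - S`, then `J^-_d(ν) = ∅` and consequently
`triple^{(4)}_{(d,e) (a,2,1^c) ν} = 0`. -/
theorem Jminus_empty (a c d e S n : ℕ) (ha : 2 ≤ a) (hc : 1 ≤ c)
    (h1 : a + 2 + c = n) (h2 : d + e = n) (hde : e ≤ d)
    (hS1 : 1 ≤ S) (hS2 : S ≤ (c + 2) / 2)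
    (hd : d < max (a + S) (c + 2 - S) ∨ a + c + 2 - S < d) :
    Jminus a 2 c d (nuSP a S c) = (∅ : Set (List ℕ × ℕ × ℕ)) ∧
    triple4 a 2 c d (nuSP a S c) = 0 := by
  have h2S : 2 * S ≤ c + 2 := by omega
  have hJ : Jminus a 2 c d (nuSP a S c) = (∅ : Set (List ℕ × ℕ × ℕ)) := by
    rw [Set.eq_empty_iff_forall_notMem]
    rintro ⟨δ, i, r⟩ hp
    simp only [Jminus, Iminus, IsPartitionOf, Set.mem_setOf_eq] at hp
    obtain ⟨⟨⟨hpart, hsum⟩, hDH, hi, hr, hNN, hXi⟩, hdlo, hdhi⟩ := hp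
    have hRpos : 0 < NN (nuSP a S c) δ (i : ℤ) ((a : ℤ) - (i : ℤ)) :=
      lt_of_le_of_lt (Nat.zero_le _) hNN
    have hcond : ¬(((i : ℤ)) < 0 ∨ ((a : ℤ) - (i : ℤ)) < 0) := by
      intro h
      rw [NN, if_pos h] at hRpos
      exact absurd hRpos (by norm_num)
    have hia : i ≤ a := by omega
    rw [NN, if_neg hcond] at hRpos
    obtain ⟨⟨κ, hκpart, hκ1, hκ2, -, -⟩⟩ := (Nat.card_pos_iff.mp hRpos).1
    have hsub : SubP δ (nuSP a S c) := fun j => le_trans (hκ1.1 j) (hκ2.1 j)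
    have hδne : δ ≠ [] := by
      intro h; rw [h, List.sum_nil] at hsum; omega
    obtain ⟨x, t, rfl⟩ : ∃ x t, δ = x :: t := by
      cases δ with
      | nil => exact absurd rfl hδne
      | cons x t => exact ⟨x, t, rfl⟩
    have hts : t.Pairwise (· ≥ ·) := (List.pairwise_cons.mp hpart.1).2
    have htpos : ∀ y ∈ t, 0 < y := fun y hy => hpart.2 y (by simp [hy])
    have htle2 : ∀ y ∈ t, y ≤ 2 := by
      intro y hy
      obtain ⟨k, hk, hk2⟩ := mem_getD hy
      have h1 : (x :: t).getD (k + 1) 0 = y := by simpa using hk2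
      have h2 := hsub (k + 1)
      rw [h1, nu_getD a S c hS1 h2S] at h2
      split_ifs at h2 <;> first | omega | exact (‹False›).elim
    obtain ⟨p, q, hcanon⟩ : ∃ p q, t = List.replicate p 2 ++ List.replicate q 1 :=
      ⟨_, _, canon t hts htpos htle2⟩
    have hxpq : x + 2 * p + q = c + 2 := by
      have h' : (x :: t).sum = x + (2 * p + q) := by
        rw [List.sum_cons, hcanon, sum22]
      omega
    have hx1 : 1 ≤ x := hpart.2 x (by simp)
    have hxp : 1 ≤ p → 2 ≤ x := by
      intro hp'
      have h2m : (2 : ℕ) ∈ t := by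
        rw [hcanon]
        exact List.mem_append_left _ (List.mem_replicate.mpr ⟨by omega, rfl⟩)
      exact (List.pairwise_cons.mp hpart.1).1 2 h2m
    have hL : (x :: t).length = p + q + 1 := by simp [hcanon]
    have hlen : 1 + p + q + S ≤ c + 2 := by
      by_contra hcon
      push_neg at hcon
      have hlt : c + 2 - S < (x :: t).length := by rw [hL]; omega
      have hpos := getD_pos' hpart.2 hlt
      have h' := hsub (c + 2 - S)
      rw [nu_getD a S c hS1 h2S] at h'
      split_ifs at h' <;> first | omega | exact (‹False›).elim
    have hp2 : 1 ≤ p → p + 1 ≤ S := by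
      intro hp'
      have hval : (x :: t).getD p 0 = 2 := by
        cases p with
        | zero => omega
        | succ p' =>
          rw [List.getD_cons_succ, hcanon, getD22]
          simp
      have h' := hsub p
      rw [hval, nu_getD a S c hS1 h2S] at h'
      split_ifs at h' <;> first | omega | exact (‹False›).elim
    have hXi' : 0 < Xi 1 (x :: (List.replicate p 2 ++ List.replicate q 1)) r c := by
      rw [← hcanon]; exact hXi
    obtain ⟨hx2, hpS, hq, hrS⟩ :=
      classify a S c x p q r hc hS1 h2S hxpq hx1 hxp hlen hp2 hXi'
    have hδeq : x :: t = deltaStarP S c := by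
      rw [hcanon, deltaStar_cons S c hS1, hx2,
        show p = S - 1 by omega, show q = c + 2 - 2 * S by omega]
    have hi0 : i = 0 := by
      by_contra hcon
      have hE1 : NN (nuSP a S c) (deltaStarP S c) (i : ℤ) ((a : ℤ) - (i : ℤ)) = 1 :=
        NN_one a S c i hS1 h2S hia
      have hE2 : NN (nuSP a S c) (deltaStarP S c) ((i : ℤ) - 1) ((a : ℤ) - (i : ℤ) + 1) = 1 := by
        have h' := NN_one a S c (i - 1) hS1 h2S (by omega)
        rw [show ((i : ℤ) - 1) = (((i - 1 : ℕ)) : ℤ) by omega,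
            show ((a : ℤ) - (i : ℤ) + 1) = ((a : ℤ) - ((i - 1 : ℕ) : ℤ)) by omega]
        exact h'
      rw [hδeq, hE1, hE2] at hNN
      exact absurd hNN (by norm_num)
    obtain ⟨hd1', hd2'⟩ := max_le_iff.mp hdlo
    subst hi0
    subst hrS
    rcases hd with hmax | hup
    · rcases lt_max_iff.mp hmax with h' | h' <;> omega
    · omega
  refine ⟨hJ, ?_⟩
  simp only [triple4]
  rw [hJ]
  exact finsum_mem_empty
end
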